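/- (Trapped Boundary Lemma) Let Ω⁺ ⊂ ℝ² be a Jordan domain, Ω⁻ = ℝ² \ closure(Ω⁺), and Γ = ∂Ω⁺ = ∂Ω⁻. Fix α ∈ (0,1) and C₀ > 0, and suppose there exists r₀ > 0 such that ε(x,r) ≤ C₀·r^α for all x ∈ Γ and all 0 < r ≤ r₀. Fix x ∈ Γ and 0 < t ≤ r₀. Then for any two points v, w ∈ ∂B(x,t) ∩ Γ, the shortest arc arc_{x,t}(v,w) on the circle ∂B(x,t) with endpoints v and w satisfies H¹(arc_{x,t}(v,w)) ∈ [0, 2C₀·t^{α+1}] ∪ [πt − C₀·t^{α+1}, πt]. -/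

import Mathlib

open Set Metric MeasureTheory

noncomputable section

abbrev E2 := EuclideanSpace ℝ (Fin 2)

/-- The point on the circle of center `x` and radius `r` at angle `t`. -/
def circlePt (x : E2) (r t : ℝ) : E2 :=
  x + r • (EuclideanSpace.equiv (Fin 2) ℝ).symm ![Real.cos t, Real.sin t]

/-- `A` is an open arc of the circle `∂B(x,r)`. -/
def IsOpenArc (x : E2) (r : ℝ) (A : Set E2) : Prop :=
  ∃ a b : ℝ, a < b ∧ b - a ≤ 2 * Real.pi ∧ A = circlePt x r '' Set.Ioo a b

/-- The `H¹`-measure of the largest open arc of `∂B(x,r)` contained in `Ω`. -/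
def maxArcMeasure (Ω : Set E2) (x : E2) (r : ℝ) : ℝ :=
  (⨆ A ∈ {A | IsOpenArc x r A ∧ A ⊆ Ω}, μH[1] A).toReal

/-- The Carleson ε-function of the Jordan domain `Ω⁺`, where `Ω⁻ = ℝ² \ closure Ω⁺`. -/
def carlesonEps (Ω : Set E2) (x : E2) (r : ℝ) : ℝ :=
  (1 / r) * max |Real.pi * r - maxArcMeasure Ω x r|
      |Real.pi * r - maxArcMeasure ((closure Ω)ᶜ) x r|

/-- `Γ` is a Jordan curve: the image of a continuous injective map of the unit circle. -/
def IsJordanCurve (Γ : Set E2) : Prop :=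
  ∃ f : Metric.sphere (0 : ℝ × ℝ) 1 → E2,
    Continuous f ∧ Function.Injective f ∧ Set.range f = Γ

/-- A Jordan domain: an open connected set whose boundary is a Jordan curve. -/
def IsJordanDomain (Ω : Set E2) : Prop :=
  IsOpen Ω ∧ IsConnected Ω ∧ IsJordanCurve (frontier Ω)

/-- An affine line in the plane. -/
def IsAffineLine (L : Set E2) : Prop :=
  ∃ p v : E2, v ≠ 0 ∧ L = {y | ∃ t : ℝ, y = p + t • v}

/-- The (smaller) angle between the lines spanned by `u` and `v`, an element of `[0, π/2]`. -/
def lineAngle (u v : E2) : ℝ :=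
  min (InnerProductGeometry.angle u v) (Real.pi - InnerProductGeometry.angle u v)


lemma circlePt_apply (x : E2) (r t : ℝ) :
    circlePt x r t 0 = x 0 + r * Real.cos t ∧ circlePt x r t 1 = x 1 + r * Real.sin t := by
  constructor <;> simp [circlePt, EuclideanSpace.equiv]

lemma circlePt_periodic (x : E2) (r : ℝ) (s : ℝ) (k : ℤ) :
    circlePt x r (s + 2 * Real.pi * k) = circlePt x r s := by
  simp [circlePt, mul_comm (2*Real.pi) (k:ℝ), Real.cos_add_int_mul_two_pi, Real.sin_add_int_mul_two_pi]

lemma circlePt_surj (x : E2) (t : ℝ) (ht : 0 < t) (y : E2) (hy : dist y x = t) :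
    ∃ φ : ℝ, circlePt x t φ = y := by
  set z : ℂ := ⟨y 0 - x 0, y 1 - x 1⟩ with hz
  have habs : ‖z‖ = t := by
    have h1 := EuclideanSpace.dist_eq y x
    rw [hy, Fin.sum_univ_two] at h1
    rw [Complex.norm_def, Complex.normSq_apply]
    simp only [hz]
    rw [h1]
    congr 1
    simp [Real.dist_eq, sq_abs, ← sq]
  have hz0 : z ≠ 0 := by
    intro h; rw [h] at habs; simp at habs; exact ht.ne' habs.symm
  refine ⟨Complex.arg z, ?_⟩
  have hc : Real.cos (Complex.arg z) = (y 0 - x 0) / t := by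
    rw [Complex.cos_arg hz0, habs]
  have hs : Real.sin (Complex.arg z) = (y 1 - x 1) / t := by
    rw [Complex.sin_arg, habs]
  ext i
  fin_cases i <;> simp [circlePt, EuclideanSpace.equiv, hc, hs] <;>
    field_simp <;> ring

lemma circlePt_inj (x : E2) (t : ℝ) (ht : 0 < t) {s s' : ℝ}
    (h : circlePt x t s = circlePt x t s') : ∃ k : ℤ, s - s' = 2 * Real.pi * k := by
  have h0 : x 0 + t * Real.cos s = x 0 + t * Real.cos s' := by
    have := congrArg (fun p : E2 => p 0) h; simpa [circlePt, EuclideanSpace.equiv] using this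
  have h1 : x 1 + t * Real.sin s = x 1 + t * Real.sin s' := by
    have := congrArg (fun p : E2 => p 1) h; simpa [circlePt, EuclideanSpace.equiv] using this
  have hc : Real.cos s = Real.cos s' := by
    have := (add_right_inj (x 0)).mp h0
    exact mul_left_cancel₀ ht.ne' this
  have hs : Real.sin s = Real.sin s' := by
    have := (add_right_inj (x 1)).mp h1
    exact mul_left_cancel₀ ht.ne' this
  exact Real.Angle.angle_eq_iff_two_pi_dvd_sub.mp (Real.Angle.cos_sin_inj hc hs)

lemma circlePt_lipschitz (x : E2) (t : ℝ) (ht : 0 ≤ t) :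
    LipschitzWith t.toNNReal (circlePt x t) := by
  rw [lipschitzWith_iff_dist_le_mul]
  intro s s'
  have hd : dist (circlePt x t s) (circlePt x t s') =
      Real.sqrt ((t * Real.cos s - t * Real.cos s')^2 + (t * Real.sin s - t * Real.sin s')^2) := by
    rw [EuclideanSpace.dist_eq, Fin.sum_univ_two]
    congr 2 <;> simp [circlePt, EuclideanSpace.equiv, Real.dist_eq, sq_abs] <;> ring_nf
  rw [hd]
  have key : (t * Real.cos s - t * Real.cos s')^2 + (t * Real.sin s - t * Real.sin s')^2
      ≤ (t * |s - s'|)^2 := by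
    have hcc := Real.cos_sub_cos s s'
    have hss := Real.sin_sub_sin s s'
    have hb : |Real.sin ((s - s')/2)| ≤ |(s-s')/2| := Real.abs_sin_le_abs
    have hsq : Real.sin ((s-s')/2)^2 ≤ ((s-s')/2)^2 := by
      rw [← sq_abs (Real.sin _), ← sq_abs ((s-s')/2)]
      exact pow_le_pow_left₀ (abs_nonneg _) hb 2
    have h1 : Real.sin ((s+s')/2)^2 + Real.cos ((s+s')/2)^2 = 1 := Real.sin_sq_add_cos_sq _
    have habs2 : (t*|s-s'|)^2 = t^2*(s-s')^2 := by rw [mul_pow, sq_abs]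
    have hc2 : t * Real.cos s - t * Real.cos s' = t * (-2 * Real.sin ((s + s') / 2) * Real.sin ((s - s') / 2)) := by rw [← hcc]; ring
    have hs2 : t * Real.sin s - t * Real.sin s' = t * (2 * Real.sin ((s - s') / 2) * Real.cos ((s + s') / 2)) := by rw [← hss]; ring
    rw [hc2, hs2, habs2]
    nlinarith [sq_nonneg t, sq_nonneg (Real.sin ((s-s')/2)), sq_nonneg (t * Real.sin ((s-s')/2))]
  calc Real.sqrt _ ≤ Real.sqrt ((t * |s-s'|)^2) := Real.sqrt_le_sqrt key
    _ = t * |s - s'| := Real.sqrt_sq (by positivity)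
    _ = t.toNNReal * dist s s' := by
      rw [Real.dist_eq, Real.coe_toNNReal t ht]

lemma arc_measure_le (x : E2) (t : ℝ) (ht : 0 ≤ t) (a b : ℝ) (hab : a ≤ b) :
    μH[1] (circlePt x t '' Set.Ioo a b) ≤ ENNReal.ofReal (t * (b - a)) := by
  have h := (circlePt_lipschitz x t ht).hausdorffMeasure_image_le zero_le_one (Set.Ioo a b)
  refine h.trans ?_
  rw [MeasureTheory.hausdorffMeasure_real, Real.volume_Ioo]
  rw [show ((t.toNNReal : ENNReal)) ^ (1:ℝ) = (t.toNNReal : ENNReal) by simp]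
  exact le_of_eq (by rw [ENNReal.ofReal_mul ht]; rfl)

lemma angle_eq (x : E2) (t : ℝ) (ht : 0 < t) (φ ψ : ℝ) :
    InnerProductGeometry.angle (circlePt x t φ - x) (circlePt x t ψ - x)
      = Real.arccos (Real.cos (ψ - φ)) := by
  have hsub : ∀ θ : ℝ, circlePt x t θ - x = t • (EuclideanSpace.equiv (Fin 2) ℝ).symm ![Real.cos θ, Real.sin θ] := by
    intro θ; simp [circlePt]
  rw [InnerProductGeometry.angle, hsub, hsub]
  have hinner : (inner ℝ (t • (EuclideanSpace.equiv (Fin 2) ℝ).symm ![Real.cos φ, Real.sin φ])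
      (t • (EuclideanSpace.equiv (Fin 2) ℝ).symm ![Real.cos ψ, Real.sin ψ]) : ℝ)
      = t * t * Real.cos (ψ - φ) := by
    rw [real_inner_smul_left, real_inner_smul_right]
    rw [show (inner ℝ ((EuclideanSpace.equiv (Fin 2) ℝ).symm ![Real.cos φ, Real.sin φ])
      ((EuclideanSpace.equiv (Fin 2) ℝ).symm ![Real.cos ψ, Real.sin ψ]) : ℝ) = Real.cos (ψ - φ) by
        rw [PiLp.inner_apply, Fin.sum_univ_two]
        simp [EuclideanSpace.equiv, Real.cos_sub]]
    ring
  have hnorm : ∀ θ : ℝ, ‖t • (EuclideanSpace.equiv (Fin 2) ℝ).symm ![Real.cos θ, Real.sin θ]‖ = t := by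
    intro θ
    rw [norm_smul, EuclideanSpace.norm_eq, Fin.sum_univ_two]
    simp [EuclideanSpace.equiv, sq_abs, ← sq, Real.sin_sq_add_cos_sq, Real.cos_sq_add_sin_sq, abs_of_pos ht]
  rw [hinner, hnorm, hnorm]
  congr 1
  field_simp

lemma core_lemma (d0 e a b c d : ℝ) (hd0 : 0 ≤ d0) (hd2 : d0 ≤ 2*Real.pi)
    (ha : 0 ≤ a) (hb : b ≤ 2*Real.pi) (hc : 0 ≤ c) (hd : d ≤ 2*Real.pi)
    (h1 : d0 ∉ Set.Ioo a b) (h2 : d0 ∉ Set.Ioo c d)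
    (hdisj : b ≤ c ∨ d ≤ a)
    (hl1 : Real.pi - e ≤ b - a) (hl2 : Real.pi - e ≤ d - c) :
    min d0 (2*Real.pi - d0) ≤ 2*e ∨ Real.pi - e ≤ min d0 (2*Real.pi - d0) := by
  simp only [Set.mem_Ioo, not_and, not_lt] at h1 h2
  have c1 : d0 ≤ a ∨ b ≤ d0 := by
    rcases le_or_gt d0 a with h | h
    · exact Or.inl h
    · exact Or.inr (h1 h)
  have c2 : d0 ≤ c ∨ d ≤ d0 := by
    rcases le_or_gt d0 c with h | h
    · exact Or.inl h
    · exact Or.inr (h2 h)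
  rcases c1 with h1' | h1' <;> rcases c2 with h2' | h2'
  · -- both right of d0 : d0 small
    left
    rcases hdisj with h | h
    · calc min d0 (2*Real.pi - d0) ≤ d0 := min_le_left _ _
        _ ≤ 2*e := by linarith
    · calc min d0 (2*Real.pi - d0) ≤ d0 := min_le_left _ _
        _ ≤ 2*e := by linarith
  · -- mixed
    right
    refine le_min (by linarith) (by linarith)
  · right
    refine le_min (by linarith) (by linarith)
  · -- both left of d0
    left
    rcases hdisj with h | h
    · calc min d0 (2*Real.pi - d0) ≤ 2*Real.pi - d0 := min_le_right _ _
        _ ≤ 2*e := by linarith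
    · calc min d0 (2*Real.pi - d0) ≤ 2*Real.pi - d0 := min_le_right _ _
        _ ≤ 2*e := by linarith

lemma sub_floor_mem (y : ℝ) : 0 ≤ y - 2*Real.pi*⌊y/(2*Real.pi)⌋ ∧ y - 2*Real.pi*⌊y/(2*Real.pi)⌋ < 2*Real.pi := by
  have h2π : (0:ℝ) < 2*Real.pi := by positivity
  have h1 := Int.floor_le (y/(2*Real.pi))
  have h2 := Int.lt_floor_add_one (y/(2*Real.pi))
  constructor
  · have := mul_le_mul_of_nonneg_left h1 h2π.le
    rw [mul_div_cancel₀ _ h2π.ne'] at this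
    linarith
  · have := mul_lt_mul_of_pos_left h2 h2π
    rw [mul_div_cancel₀ _ h2π.ne'] at this
    nlinarith [Real.pi_pos]

lemma normalize_arc (φ ψ a b : ℝ) (hab : a < b) (hlen : b - a ≤ 2*Real.pi)
    (hφ : ∀ s ∈ Set.Ioo a b, ∀ k : ℤ, s ≠ φ + 2*Real.pi*k)
    (hψ : ∀ s ∈ Set.Ioo a b, ∀ k : ℤ, s ≠ ψ + 2*Real.pi*k) :
    ∃ a' b' : ℝ, b' - a' = b - a ∧ 0 ≤ a' ∧ b' ≤ 2*Real.pi ∧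
      (ψ - φ - 2*Real.pi*⌊(ψ-φ)/(2*Real.pi)⌋) ∉ Set.Ioo a' b' ∧
      ∀ s' ∈ Set.Ioo a' b', ∃ k : ℤ, s' + φ + 2*Real.pi*k ∈ Set.Ioo a b := by
  have h2π : (0:ℝ) < 2*Real.pi := by positivity
  set n : ℤ := ⌊(a-φ)/(2*Real.pi)⌋ with hn
  set a' : ℝ := (a-φ) - 2*Real.pi*n with ha'
  refine ⟨a', a' + (b-a), by ring, (sub_floor_mem (a-φ)).1, ?_, ?_, ?_⟩
  · -- b' ≤ 2π
    by_contra hcon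
    push_neg at hcon
    have h2mem : (2*Real.pi) ∈ Set.Ioo a' (a' + (b-a)) :=
      ⟨(sub_floor_mem (a-φ)).2, hcon⟩
    have : 2*Real.pi + φ + 2*Real.pi*n ∈ Set.Ioo a b := by
      constructor <;> [skip; skip] <;> simp only [Set.mem_Ioo] at h2mem <;> push_cast [ha'] at h2mem ⊢ <;> linarith [h2mem.1, h2mem.2]
    exact hφ _ this (n+1) (by push_cast; ring)
  · -- d0 avoidance
    intro hmem
    set m : ℤ := ⌊(ψ-φ)/(2*Real.pi)⌋ with hm
    simp only [Set.mem_Ioo] at hmem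
    have : (ψ - φ - 2*Real.pi*m) + φ + 2*Real.pi*n ∈ Set.Ioo a b := by
      constructor <;> push_cast [ha'] at hmem ⊢ <;> linarith [hmem.1, hmem.2]
    exact hψ _ this (n - m) (by push_cast; ring)
  · intro s' hs'
    refine ⟨n, ?_⟩
    simp only [Set.mem_Ioo] at hs' ⊢
    constructor <;> push_cast [ha'] at hs' ⊢ <;> linarith [hs'.1, hs'.2]

lemma arccos_cos_eq_min (d0 : ℝ) (h0 : 0 ≤ d0) (h2 : d0 ≤ 2*Real.pi) :
    Real.arccos (Real.cos d0) = min d0 (2*Real.pi - d0) := by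
  rcases le_or_gt d0 Real.pi with h | h
  · rw [Real.arccos_cos h0 h, min_eq_left (by linarith)]
  · rw [show Real.cos d0 = Real.cos (2*Real.pi - d0) by rw [Real.cos_two_pi_sub],
      Real.arccos_cos (by linarith [Real.pi_pos]) (by linarith), min_eq_right (by linarith)]

lemma exists_arc (Ω : Set E2) (x : E2) (t : ℝ) (ht : 0 < t) (c : ℝ)
    (hc : 0 < c) (hM : c ≤ maxArcMeasure Ω x t) (η : ℝ) (hη : 0 < η) :
    ∃ a b : ℝ, a < b ∧ b - a ≤ 2*Real.pi ∧ (circlePt x t '' Set.Ioo a b) ⊆ Ω ∧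
      c - η < t * (b - a) := by
  set s := ⨆ A ∈ {A | IsOpenArc x t A ∧ A ⊆ Ω}, μH[1] A with hs
  have hM' : c ≤ s.toReal := hM
  have htop : s ≠ ⊤ := by
    intro h
    rw [h] at hM'; simp at hM'; linarith
  have hlt : ENNReal.ofReal (c - η) < s := by
    rcases le_or_gt (c - η) 0 with h | h
    · rw [ENNReal.ofReal_of_nonpos h]
      refine pos_iff_ne_zero.mpr ?_
      intro h0
      rw [h0] at hM'; simp at hM'; linarith
    · rw [ENNReal.ofReal_lt_iff_lt_toReal h.le htop]
      linarith
  rw [hs] at hlt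
  simp only [lt_iSup_iff] at hlt
  obtain ⟨A, hA, hltA⟩ := hlt
  obtain ⟨⟨a, b, hab, hlen, hAeq⟩, hsub⟩ := hA
  refine ⟨a, b, hab, hlen, hAeq ▸ hsub, ?_⟩
  by_contra hcon
  push_neg at hcon
  have h1 : μH[1] A ≤ ENNReal.ofReal (t * (b - a)) := hAeq ▸ arc_measure_le x t ht.le a b hab.le
  have h2 : ENNReal.ofReal (t * (b-a)) ≤ ENNReal.ofReal (c - η) := ENNReal.ofReal_le_ofReal hcon
  exact absurd (hltA.trans_le (h1.trans h2)) (lt_irrefl _)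


set_option maxHeartbeats 2000000 in
/-- Trapped Boundary Lemma: for `v, w ∈ ∂B(x,t) ∩ Γ`, the length of the shortest arc of
`∂B(x,t)` joining `v` and `w` (namely `t` times the angle `∠(v-x, w-x)`) lies in
`[0, 2C₀ t^{α+1}] ∪ [πt - C₀ t^{α+1}, πt]`. -/
theorem trapped_boundary (Ωp : Set E2) (hΩ : IsJordanDomain Ωp)
    (Ωm : Set E2) (hΩm : Ωm = (closure Ωp)ᶜ)
    (Γ : Set E2) (hΓp : Γ = frontier Ωp) (hΓm : Γ = frontier Ωm)
    (α C₀ : ℝ) (hα : α ∈ Set.Ioo (0 : ℝ) 1) (hC₀ : 0 < C₀)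
    (r₀ : ℝ) (hr₀ : 0 < r₀)
    (hε : ∀ x ∈ Γ, ∀ r : ℝ, 0 < r → r ≤ r₀ → carlesonEps Ωp x r ≤ C₀ * r ^ α)
    (x : E2) (hx : x ∈ Γ) (t : ℝ) (ht : 0 < t) (ht' : t ≤ r₀)
    (v w : E2) (hv : v ∈ Metric.sphere x t ∩ Γ) (hw : w ∈ Metric.sphere x t ∩ Γ) :
    t * InnerProductGeometry.angle (v - x) (w - x) ∈
      Set.Icc 0 (2 * C₀ * t ^ (α + 1)) ∪
        Set.Icc (Real.pi * t - C₀ * t ^ (α + 1)) (Real.pi * t) := by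

  obtain ⟨hv1, hv2⟩ := hv
  obtain ⟨hw1, hw2⟩ := hw
  have hπ := Real.pi_pos
  obtain ⟨φv, hφv⟩ := circlePt_surj x t ht v (mem_sphere.mp hv1)
  obtain ⟨φw, hφw⟩ := circlePt_surj x t ht w (mem_sphere.mp hw1)
  set θ := InnerProductGeometry.angle (v - x) (w - x) with hθdef
  set d0 : ℝ := (φw - φv) - 2*Real.pi*⌊(φw-φv)/(2*Real.pi)⌋ with hd0def
  obtain ⟨hd01, hd02⟩ := sub_floor_mem (φw - φv)
  have hθ : θ = min d0 (2*Real.pi - d0) := by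
    rw [hθdef, ← hφv, ← hφw, angle_eq x t ht, ← arccos_cos_eq_min d0 hd01 hd02.le]
    congr 1
    rw [hd0def, show φw - φv - 2*Real.pi*(⌊(φw-φv)/(2*Real.pi)⌋:ℤ)
        = (φw - φv) + ((-⌊(φw-φv)/(2*Real.pi)⌋ : ℤ):ℝ) * (2*Real.pi) by push_cast; ring,
      Real.cos_add_int_mul_two_pi]
  have hθ0 : 0 ≤ θ := InnerProductGeometry.angle_nonneg _ _
  have hθπ : θ ≤ Real.pi := InnerProductGeometry.angle_le_pi _ _
  set ε : ℝ := C₀ * t ^ (α + 1) with hεdef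
  have hεpos : 0 < ε := by
    have : (0:ℝ) < t ^ (α+1) := Real.rpow_pos_of_pos ht _
    positivity
  set M1 : ℝ := maxArcMeasure Ωp x t with hM1
  set M2 : ℝ := maxArcMeasure ((closure Ωp)ᶜ) x t with hM2
  have hmax : max |Real.pi * t - M1| |Real.pi * t - M2| ≤ ε := by
    have h := hε x hx t ht ht'
    rw [carlesonEps, one_div, inv_mul_le_iff₀ ht] at h
    calc max |Real.pi * t - M1| |Real.pi * t - M2| ≤ t * (C₀ * t ^ α) := h
      _ = ε := by rw [hεdef, Real.rpow_add ht, Real.rpow_one]; ring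
  have hM1' : Real.pi * t - ε ≤ M1 := by
    have := (le_max_left _ _).trans hmax
    have := abs_le.mp this
    linarith [this.1]
  have hM2' : Real.pi * t - ε ≤ M2 := by
    have := (le_max_right _ _).trans hmax
    have := abs_le.mp this
    linarith [this.1]
  by_contra hcon
  simp only [Set.mem_union, Set.mem_Icc, not_or, not_and, not_le] at hcon
  have h2ε : 2 * ε < t * θ := by
    have := hcon.1 (mul_nonneg ht.le hθ0)
    linarith
  have hθπt : t * θ ≤ Real.pi * t := by nlinarith
  have hupper : t * θ < Real.pi * t - ε := by
    by_contra h'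
    push_neg at h'
    exact absurd (hcon.2 h') (not_lt.mpr hθπt)
  set η : ℝ := min (t*θ - 2*ε) (Real.pi*t - ε - t*θ) / 4 with hηdef
  have hη : 0 < η := by
    rw [hηdef]
    have h1 : 0 < t*θ - 2*ε := by linarith
    have h2 : 0 < Real.pi*t - ε - t*θ := by linarith
    have := lt_min h1 h2
    positivity
  have hcpos : 0 < Real.pi * t - ε := by nlinarith
  -- v, w not in Ωp nor Ωm
  have hΩpopen : IsOpen Ωp := hΩ.1
  have hΩmopen : IsOpen ((closure Ωp)ᶜ) := isClosed_closure.isOpen_compl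
  have hvp : v ∉ Ωp := by
    have : v ∈ frontier Ωp := hΓp ▸ hv2
    rw [hΩpopen.frontier_eq] at this
    exact this.2
  have hwp : w ∉ Ωp := by
    have : w ∈ frontier Ωp := hΓp ▸ hw2
    rw [hΩpopen.frontier_eq] at this
    exact this.2
  have hvm : v ∉ (closure Ωp)ᶜ := by
    have : v ∈ frontier Ωm := hΓm ▸ hv2
    rw [hΩm] at this
    rw [hΩmopen.frontier_eq] at this
    exact this.2
  have hwm : w ∉ (closure Ωp)ᶜ := by
    have : w ∈ frontier Ωm := hΓm ▸ hw2
    rw [hΩm] at this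
    rw [hΩmopen.frontier_eq] at this
    exact this.2
  -- extract nearly-maximal arcs
  obtain ⟨a, b, hab, hlen1, hsub1, hlong1⟩ :=
    exists_arc Ωp x t ht (Real.pi * t - ε) hcpos hM1' η hη
  obtain ⟨c, d, hcd, hlen2, hsub2, hlong2⟩ :=
    exists_arc ((closure Ωp)ᶜ) x t ht (Real.pi * t - ε) hcpos hM2' η hη
  -- avoidance hypotheses
  have havoid : ∀ (a' b' : ℝ), (circlePt x t '' Set.Ioo a' b') ⊆ Ωp ∨
      (circlePt x t '' Set.Ioo a' b') ⊆ (closure Ωp)ᶜ →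
      ∀ φ0 : ℝ, circlePt x t φ0 = v ∨ circlePt x t φ0 = w →
      ∀ s ∈ Set.Ioo a' b', ∀ k : ℤ, s ≠ φ0 + 2*Real.pi*k := by
    intro a' b' hsub φ0 hφ0 s hs k hk
    have hpt : circlePt x t s = circlePt x t φ0 := by
      rw [hk, show φ0 + 2*Real.pi*(k:ℝ) = φ0 + 2*Real.pi*k from rfl, circlePt_periodic]
    rcases hsub with hsub | hsub
    · have hmem : circlePt x t s ∈ Ωp := hsub ⟨s, hs, rfl⟩
      rcases hφ0 with h | h
      · exact hvp (by rwa [hpt, h] at hmem)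
      · exact hwp (by rwa [hpt, h] at hmem)
    · have hmem : circlePt x t s ∈ (closure Ωp)ᶜ := hsub ⟨s, hs, rfl⟩
      rcases hφ0 with h | h
      · exact hvm (by rwa [hpt, h] at hmem)
      · exact hwm (by rwa [hpt, h] at hmem)
  obtain ⟨a1, b1, hlen1', ha1, hb1, hd0n1, hback1⟩ :=
    normalize_arc φv φw a b hab hlen1
      (havoid a b (Or.inl hsub1) φv (Or.inl hφv))
      (havoid a b (Or.inl hsub1) φw (Or.inr hφw))
  obtain ⟨a2, b2, hlen2', ha2, hb2, hd0n2, hback2⟩ :=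
    normalize_arc φv φw c d hcd hlen2
      (havoid c d (Or.inr hsub2) φv (Or.inl hφv))
      (havoid c d (Or.inr hsub2) φw (Or.inr hφw))
  have hab1 : a1 < b1 := by linarith
  have hcd2 : a2 < b2 := by linarith
  -- disjointness
  have hdisj : b1 ≤ a2 ∨ b2 ≤ a1 := by
    by_contra hc'
    push_neg at hc'
    set s0 : ℝ := (max a1 a2 + min b1 b2) / 2 with hs0
    have hmaxmin : max a1 a2 < min b1 b2 := by
      rcases max_cases a1 a2 with ⟨h1, h2⟩ | ⟨h1, h2⟩ <;>
        rcases min_cases b1 b2 with ⟨h3, h4⟩ | ⟨h3, h4⟩ <;> rw [h1, h3] <;> linarith [hc'.1, hc'.2]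
    have hs01 : s0 ∈ Set.Ioo a1 b1 := by
      constructor <;> rw [hs0]
      · have := le_max_left a1 a2; linarith [hmaxmin]
      · have := min_le_left b1 b2; linarith [hmaxmin]
    have hs02 : s0 ∈ Set.Ioo a2 b2 := by
      constructor <;> rw [hs0]
      · have := le_max_right a1 a2; linarith [hmaxmin]
      · have := min_le_right b1 b2; linarith [hmaxmin]
    obtain ⟨k1, hk1⟩ := hback1 s0 hs01
    obtain ⟨k2, hk2⟩ := hback2 s0 hs02
    have heq : circlePt x t (s0 + φv + 2*Real.pi*k1) = circlePt x t (s0 + φv + 2*Real.pi*k2) := by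
      rw [show s0 + φv + 2*Real.pi*(k1:ℝ) = (s0 + φv) + 2*Real.pi*k1 by ring,
        show s0 + φv + 2*Real.pi*(k2:ℝ) = (s0 + φv) + 2*Real.pi*k2 by ring,
        circlePt_periodic, circlePt_periodic]
    have hm1 : circlePt x t (s0 + φv + 2*Real.pi*k1) ∈ Ωp := hsub1 ⟨_, hk1, rfl⟩
    have hm2 : circlePt x t (s0 + φv + 2*Real.pi*k2) ∈ (closure Ωp)ᶜ := hsub2 ⟨_, hk2, rfl⟩
    rw [heq] at hm1
    exact hm2 (subset_closure hm1)
  -- lengths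
  set e : ℝ := (ε + η) / t with hedef
  have heq' : Real.pi - (ε+η)/t = (Real.pi*t - (ε+η))/t := by field_simp
  have hl1 : Real.pi - e ≤ b1 - a1 := by
    rw [hlen1', hedef, heq', div_le_iff₀ ht]
    nlinarith [hlong1]
  have hl2 : Real.pi - e ≤ b2 - a2 := by
    rw [hlen2', hedef, heq', div_le_iff₀ ht]
    nlinarith [hlong2]
  have hcore := core_lemma d0 e a1 b1 a2 b2 hd01 hd02.le ha1 hb1 ha2 hb2 hd0n1 hd0n2 hdisj hl1 hl2
  have hη4a : 4 * η ≤ t*θ - 2*ε := by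
    rw [hηdef]; have := min_le_left (t*θ - 2*ε) (Real.pi*t - ε - t*θ); linarith
  have hη4b : 4 * η ≤ Real.pi*t - ε - t*θ := by
    rw [hηdef]; have := min_le_right (t*θ - 2*ε) (Real.pi*t - ε - t*θ); linarith
  rcases hcore with h | h
  · rw [← hθ] at h
    have : t * θ ≤ 2 * (ε + η) := by
      have := mul_le_mul_of_nonneg_left h ht.le
      rw [hedef] at this
      calc t * θ ≤ t * (2 * ((ε+η)/t)) := this
        _ = 2 * (ε + η) := by field_simp
    linarith
  · rw [← hθ] at h
    have : Real.pi - e ≤ θ := h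
    have h2 : t * (Real.pi - e) ≤ t * θ := mul_le_mul_of_nonneg_left this ht.le
    have h3 : t * (Real.pi - e) = Real.pi * t - (ε + η) := by
      rw [hedef]; field_simp; try ring
    linarith


end
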